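/- arXiv:1811.09034 — 3 statements merged into one kernel-verified Lean document; each statement's English description precedes it below -/
import Mathlib

section
/- Let $n \ge 1$ and let $u_0 \in L^1(\mathbb{R}^n)$ with $\int_{\mathbb{R}^n} u_0\,dx = M$. Define $u(\cdot,t) = G_t * u_0$ for $t>0$, where $G_t(x) = (4\pi t)^{-n/2} e^{-|x|^2/(4t)}$ is the Gaussian heat kernel. Then $\|u(\cdot,t) - M G_t\|_{L^1(\mathbb{R}^n)} \to 0$ as $t \to \infty$. -/
open Real MeasureTheory Filter

/-- The Gaussian heat kernel on `ℝⁿ`: `G t x = (4πt)^(-n/2) exp(-‖x‖²/(4t))`. -/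
noncomputable def heatKernel (n : ℕ) (t : ℝ) (x : EuclideanSpace ℝ (Fin n)) : ℝ :=
  (4 * π * t) ^ (-(n : ℝ) / 2) * Real.exp (-‖x‖ ^ 2 / (4 * t))

/-- The solution of the heat equation with initial data `u0`, `u(·,t) = G_t * u0`. -/
noncomputable def heatSol (n : ℕ) (u0 : EuclideanSpace ℝ (Fin n) → ℝ) (t : ℝ)
    (x : EuclideanSpace ℝ (Fin n)) : ℝ :=
  ∫ y, heatKernel n t (x - y) * u0 y

open scoped Topology

namespace HeatAux

abbrev E (n : ℕ) := EuclideanSpace ℝ (Fin n)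

lemma hk_eq (n : ℕ) (t : ℝ) (x : E n) :
    heatKernel n t x = (4 * π * t) ^ (-(n : ℝ) / 2) * rexp (-(1 / (4 * t)) * ‖x‖ ^ 2) := by
  rw [heatKernel]
  congr 1
  ring_nf

lemma hk_nonneg (n : ℕ) {t : ℝ} (ht : 0 < t) (x : E n) : 0 ≤ heatKernel n t x :=
  mul_nonneg (Real.rpow_nonneg (by positivity) _) (Real.exp_nonneg _)

lemma hk_cont (n : ℕ) (t : ℝ) : Continuous (heatKernel n t) := by
  unfold heatKernel
  fun_prop

lemma integrable_gauss (n : ℕ) {b : ℝ} (hb : 0 < b) :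
    Integrable (fun x : E n => rexp (-b * ‖x‖ ^ 2)) := by
  have h := (GaussianFourier.integrable_cexp_neg_mul_sq_norm_add (V := E n)
      (b := (b : ℂ)) (by simpa using hb) 0 0).norm
  refine h.congr (Filter.Eventually.of_forall fun x => ?_)
  have hc : (-(b : ℂ) * (‖x‖ : ℂ) ^ 2 + 0 * ((inner ℝ 0 x : ℝ) : ℂ)) = ((-b * ‖x‖ ^ 2 : ℝ) : ℂ) := by
    push_cast; ring
  simp only [hc, Complex.norm_exp_ofReal]

lemma hk_integrable (n : ℕ) {t : ℝ} (ht : 0 < t) : Integrable (heatKernel n t) := by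
  have : heatKernel n t = fun x : E n =>
      (4 * π * t) ^ (-(n : ℝ) / 2) * rexp (-(1 / (4 * t)) * ‖x‖ ^ 2) :=
    funext fun x => hk_eq n t x
  rw [this]
  exact (integrable_gauss n (by positivity)).const_mul _

lemma hk_integral (n : ℕ) {t : ℝ} (ht : 0 < t) : ∫ x : E n, heatKernel n t x = 1 := by
  simp only [hk_eq]
  rw [integral_const_mul, GaussianFourier.integral_rexp_neg_mul_sq_norm (by positivity),
    finrank_euclideanSpace_fin]
  have h1 : π / (1 / (4 * t)) = 4 * π * t := by field_simp
  rw [h1, ← Real.rpow_add (by positivity), neg_div, neg_add_cancel, Real.rpow_zero]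

lemma hk_scale (n : ℕ) {t : ℝ} (ht : 0 < t) (z : E n) :
    heatKernel n t (Real.sqrt t • z) = t ^ (-(n : ℝ) / 2) * heatKernel n 1 z := by
  unfold heatKernel
  rw [norm_smul]
  have h1 : ‖Real.sqrt t‖ = Real.sqrt t := abs_of_nonneg (Real.sqrt_nonneg t)
  have h2 : (‖Real.sqrt t‖ * ‖z‖) ^ 2 = t * ‖z‖ ^ 2 := by
    rw [h1, mul_pow, Real.sq_sqrt ht.le]
  rw [h2]
  have h3 : -(t * ‖z‖ ^ 2) / (4 * t) = -‖z‖ ^ 2 / (4 * 1) := by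
    field_simp
  rw [h3]
  rw [show (4 * π * t) = (4 * π) * t by ring, Real.mul_rpow (by positivity) ht.le, mul_one]
  ring


noncomputable def phi (n : ℕ) (t : ℝ) (y : E n) : ℝ :=
  ∫ x : E n, |heatKernel n t (x - y) - heatKernel n t x|

lemma phi_nonneg (n : ℕ) (t : ℝ) (y : E n) : 0 ≤ phi n t y :=
  integral_nonneg fun x => abs_nonneg _

lemma phi_le_two (n : ℕ) {t : ℝ} (ht : 0 < t) (y : E n) : phi n t y ≤ 2 := by
  have h1 : Integrable (fun x : E n => heatKernel n t (x - y)) :=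
    (hk_integrable n ht).comp_sub_right y
  have h2 := hk_integrable n ht
  calc phi n t y ≤ ∫ x : E n, (heatKernel n t (x - y) + heatKernel n t x) := by
        refine integral_mono_of_nonneg (Filter.Eventually.of_forall fun x => abs_nonneg _)
          (h1.add h2) (Filter.Eventually.of_forall fun x => ?_)
        calc |heatKernel n t (x - y) - heatKernel n t x|
            ≤ |heatKernel n t (x - y)| + |heatKernel n t x| := abs_sub _ _
          _ = heatKernel n t (x - y) + heatKernel n t x := by
              rw [abs_of_nonneg (hk_nonneg n ht _), abs_of_nonneg (hk_nonneg n ht _)]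
    _ = 2 := by
        rw [integral_add h1 h2, integral_sub_right_eq_self (heatKernel n t) y,
          hk_integral n ht]
        norm_num

lemma phi_stronglyMeasurable (n : ℕ) (t : ℝ) : StronglyMeasurable (phi n t) := by
  have hc : Continuous fun p : E n × E n => |heatKernel n t (p.2 - p.1) - heatKernel n t p.2| :=
    (((hk_cont n t).comp (continuous_snd.sub continuous_fst)).sub
      ((hk_cont n t).comp continuous_snd)).abs
  exact hc.stronglyMeasurable.integral_prod_right'

lemma phi_scale (n : ℕ) {t : ℝ} (ht : 0 < t) (y : E n) :
    phi n t y = phi n 1 ((Real.sqrt t)⁻¹ • y) := by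
  have hst : (0 : ℝ) < Real.sqrt t := Real.sqrt_pos.2 ht
  have h := Measure.integral_comp_smul (volume : Measure (E n))
    (fun x => |heatKernel n t (x - y) - heatKernel n t x|) (Real.sqrt t)
  rw [finrank_euclideanSpace_fin] at h
  have key : ∀ z : E n,
      |heatKernel n t (Real.sqrt t • z - y) - heatKernel n t (Real.sqrt t • z)|
        = t ^ (-(n : ℝ) / 2) * |heatKernel n 1 (z - (Real.sqrt t)⁻¹ • y) - heatKernel n 1 z| := by
    intro z
    have hz : Real.sqrt t • z - y = Real.sqrt t • (z - (Real.sqrt t)⁻¹ • y) := by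
      rw [smul_sub, smul_inv_smul₀ hst.ne']
    rw [hz, hk_scale n ht, hk_scale n ht, ← mul_sub, abs_mul,
      abs_of_nonneg (Real.rpow_nonneg ht.le _)]
  simp only [key] at h
  rw [integral_const_mul] at h
  have hpow : |((Real.sqrt t ^ n : ℝ))⁻¹| = t ^ (-(n : ℝ) / 2) := by
    rw [abs_of_nonneg (by positivity)]
    rw [← Real.rpow_natCast (Real.sqrt t) n, Real.sqrt_eq_rpow,
      ← Real.rpow_mul ht.le, ← Real.rpow_neg ht.le]
    ring_nf
  rw [hpow, smul_eq_mul] at h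
  have hne : (t : ℝ) ^ (-(n : ℝ) / 2) ≠ 0 := by positivity
  exact (mul_left_cancel₀ hne h).symm


lemma bound_aux (n : ℕ) {a : E n} (ha : ‖a‖ ≤ 1) (z : E n) :
    |heatKernel n 1 (z - a) - heatKernel n 1 z|
      ≤ (4 * π * 1) ^ (-(n : ℝ) / 2) * (rexp (1 / 4) + 1) * rexp (-(1 / 8) * ‖z‖ ^ 2) := by
  have hz : ‖z‖ ≤ ‖z - a‖ + ‖a‖ := by
    calc ‖z‖ = ‖z - a + a‖ := by rw [sub_add_cancel]
      _ ≤ ‖z - a‖ + ‖a‖ := norm_add_le _ _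
  have hc : (0 : ℝ) ≤ (4 * π * 1) ^ (-(n : ℝ) / 2) := Real.rpow_nonneg (by positivity) _
  have hA : rexp (-‖z - a‖ ^ 2 / (4 * 1)) ≤ rexp (1 / 4) * rexp (-(1 / 8) * ‖z‖ ^ 2) := by
    rw [← Real.exp_add]
    apply Real.exp_le_exp.2
    have h1 : ‖z‖ ≤ ‖z - a‖ + 1 := by linarith
    nlinarith [sq_nonneg (‖z - a‖ - 1), mul_self_le_mul_self (norm_nonneg z) h1,
      norm_nonneg (z - a)]
  have hB : rexp (-‖z‖ ^ 2 / (4 * 1)) ≤ rexp (-(1 / 8) * ‖z‖ ^ 2) := by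
    apply Real.exp_le_exp.2
    nlinarith [norm_nonneg z]
  unfold heatKernel
  rw [← mul_sub, abs_mul, abs_of_nonneg hc]
  calc (4 * π * 1) ^ (-(n : ℝ) / 2) * |rexp (-‖z - a‖ ^ 2 / (4 * 1)) - rexp (-‖z‖ ^ 2 / (4 * 1))|
      ≤ (4 * π * 1) ^ (-(n : ℝ) / 2) *
          (rexp (1 / 4) * rexp (-(1 / 8) * ‖z‖ ^ 2) + rexp (-(1 / 8) * ‖z‖ ^ 2)) := by
        apply mul_le_mul_of_nonneg_left _ hc
        calc |rexp (-‖z - a‖ ^ 2 / (4 * 1)) - rexp (-‖z‖ ^ 2 / (4 * 1))|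
            ≤ |rexp (-‖z - a‖ ^ 2 / (4 * 1))| + |rexp (-‖z‖ ^ 2 / (4 * 1))| := abs_sub _ _
          _ = rexp (-‖z - a‖ ^ 2 / (4 * 1)) + rexp (-‖z‖ ^ 2 / (4 * 1)) := by
              rw [abs_of_nonneg (Real.exp_nonneg _), abs_of_nonneg (Real.exp_nonneg _)]
          _ ≤ _ := add_le_add hA hB
    _ = (4 * π * 1) ^ (-(n : ℝ) / 2) * (rexp (1 / 4) + 1) * rexp (-(1 / 8) * ‖z‖ ^ 2) := by
        ring

lemma phi_tendsto (n : ℕ) (y : E n) :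
    Tendsto (fun t => phi n t y) atTop (𝓝 0) := by
  have hinv : Tendsto (fun t : ℝ => (Real.sqrt t)⁻¹) atTop (𝓝 0) := by
    refine (tendsto_rpow_neg_atTop (by norm_num : (0:ℝ) < 1/2)).congr' ?_
    filter_upwards [eventually_gt_atTop (0:ℝ)] with t ht
    rw [Real.rpow_neg ht.le, Real.sqrt_eq_rpow]
  have ha : Tendsto (fun t : ℝ => (Real.sqrt t)⁻¹ • y) atTop (𝓝 (0 : E n)) := by
    simpa using hinv.smul_const y
  have key : Tendsto (fun t : ℝ => phi n 1 ((Real.sqrt t)⁻¹ • y)) atTop (𝓝 0) := by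
    have hdct := tendsto_integral_filter_of_dominated_convergence
      (μ := (volume : Measure (E n))) (l := atTop)
      (F := fun (t : ℝ) (z : E n) =>
        |heatKernel n 1 (z - (Real.sqrt t)⁻¹ • y) - heatKernel n 1 z|)
      (f := fun _ => (0 : ℝ))
      (bound := fun z => (4 * π * 1) ^ (-(n : ℝ) / 2) * (rexp (1 / 4) + 1)
        * rexp (-(1 / 8) * ‖z‖ ^ 2))
      ?_ ?_ ?_ ?_
    · simpa [phi] using hdct
    · refine Filter.Eventually.of_forall fun t => Continuous.aestronglyMeasurable ?_
      exact (((hk_cont n 1).comp (continuous_id.sub continuous_const)).sub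
        (hk_cont n 1)).abs
    · filter_upwards [eventually_ge_atTop (max 1 (‖y‖ ^ 2))] with t ht
      have ht1 : (0:ℝ) < t := lt_of_lt_of_le one_pos (le_trans (le_max_left _ _) ht)
      have hst : (0:ℝ) < Real.sqrt t := Real.sqrt_pos.2 ht1
      have hy : ‖y‖ ≤ Real.sqrt t := by
        rw [show ‖y‖ = Real.sqrt (‖y‖ ^ 2) from (Real.sqrt_sq (norm_nonneg y)).symm]
        exact Real.sqrt_le_sqrt (le_trans (le_max_right _ _) ht)
      have hnorm : ‖(Real.sqrt t)⁻¹ • y‖ ≤ 1 := by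
        rw [norm_smul, Real.norm_eq_abs, abs_of_nonneg (inv_nonneg.2 hst.le)]
        calc (Real.sqrt t)⁻¹ * ‖y‖ ≤ (Real.sqrt t)⁻¹ * Real.sqrt t := by gcongr
          _ = 1 := inv_mul_cancel₀ hst.ne'
      exact Filter.Eventually.of_forall fun z => by
        simpa [Real.norm_eq_abs, abs_abs] using bound_aux n hnorm z
    · exact (integrable_gauss n (by norm_num : (0:ℝ) < 1/8)).const_mul _
    · refine Filter.Eventually.of_forall fun z => ?_
      have hcont : Continuous fun a : E n =>
          |heatKernel n 1 (z - a) - heatKernel n 1 z| :=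
        (((hk_cont n 1).comp (continuous_const.sub continuous_id)).sub
          continuous_const).abs
      have := (hcont.tendsto 0).comp ha
      simpa [Function.comp_def] using this
  refine key.congr' ?_
  filter_upwards [eventually_gt_atTop (0:ℝ)] with t ht
  exact (phi_scale n ht y).symm


lemma main_ineq (n : ℕ) {u0 : E n → ℝ} (hu0 : Integrable u0) {t : ℝ} (ht : 0 < t) :
    ∫ x : E n, |heatSol n u0 t x - (∫ x : E n, u0 x) * heatKernel n t x|
      ≤ ∫ y : E n, phi n t y * |u0 y| := by
  set G := heatKernel n t with hG
  have hGc : Continuous G := hk_cont n t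
  have hGi : Integrable G := hk_integrable n ht
  have hGbd : ∀ x : E n, ‖G x‖ ≤ (4 * π * t) ^ (-(n : ℝ) / 2) := by
    intro x
    rw [Real.norm_eq_abs, abs_of_nonneg (hk_nonneg n ht x), heatKernel]
    have : rexp (-‖x‖ ^ 2 / (4 * t)) ≤ 1 := by
      rw [Real.exp_le_one_iff]
      have : (0:ℝ) ≤ ‖x‖ ^ 2 / (4 * t) := by positivity
      rw [neg_div]; linarith
    calc (4 * π * t) ^ (-(n : ℝ) / 2) * rexp (-‖x‖ ^ 2 / (4 * t))
        ≤ (4 * π * t) ^ (-(n : ℝ) / 2) * 1 :=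
          mul_le_mul_of_nonneg_left this (Real.rpow_nonneg (by positivity) _)
      _ = _ := mul_one _
  have hint1 : ∀ x : E n, Integrable (fun y => G (x - y) * u0 y) := fun x =>
    hu0.bdd_mul ((hGc.comp (continuous_const.sub continuous_id)).aestronglyMeasurable)
      (Filter.Eventually.of_forall fun y => hGbd (x - y))
  -- pointwise identity and bound
  have hpt : ∀ x : E n, |heatSol n u0 t x - (∫ x : E n, u0 x) * G x|
      ≤ ∫ y : E n, |G (x - y) - G x| * |u0 y| := by
    intro x
    have h2 : Integrable (fun y : E n => G x * u0 y) := hu0.const_mul _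
    have hid : heatSol n u0 t x - (∫ x : E n, u0 x) * G x
        = ∫ y : E n, (G (x - y) - G x) * u0 y := by
      rw [heatSol]
      have : (∫ x : E n, u0 x) * G x = ∫ y : E n, G x * u0 y := by
        rw [integral_const_mul]; ring
      rw [this, ← integral_sub (hint1 x) h2]
      simp_rw [sub_mul]
    rw [hid, ← Real.norm_eq_abs]
    refine le_trans (norm_integral_le_integral_norm _) (le_of_eq ?_)
    congr 1; funext y; rw [Real.norm_eq_abs, abs_mul]
  -- the product function
  set F : E n × E n → ℝ := fun p => |G (p.2 - p.1) - G p.2| * |u0 p.1| with hF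
  have hFm : AEStronglyMeasurable F ((volume : Measure (E n)).prod volume) := by
    have h1 : Continuous fun p : E n × E n => |G (p.2 - p.1) - G p.2| :=
      ((hGc.comp (continuous_snd.sub continuous_fst)).sub (hGc.comp continuous_snd)).abs
    have h2 : AEStronglyMeasurable (fun p : E n × E n => |u0 p.1|)
        ((volume : Measure (E n)).prod volume) := by
      have := (hu0.aestronglyMeasurable.norm).comp_quasiMeasurePreserving
        (Measure.quasiMeasurePreserving_fst (μ := (volume : Measure (E n)))
          (ν := (volume : Measure (E n))))
      simpa [Function.comp_def, Real.norm_eq_abs] using this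
    exact h1.aestronglyMeasurable.mul h2
  have hslice : ∀ y : E n, ∫ x : E n, F (y, x) = phi n t y * |u0 y| := by
    intro y
    rw [hF]
    simp only
    rw [integral_mul_const, phi]
  have hphi_int : Integrable (fun y : E n => phi n t y * |u0 y|) := by
    refine (hu0.abs.const_mul 2).mono'
      (((phi_stronglyMeasurable n t).aestronglyMeasurable).mul
        hu0.abs.aestronglyMeasurable) ?_
    refine Filter.Eventually.of_forall fun y => ?_
    rw [Real.norm_eq_abs, abs_mul, abs_abs,
      abs_of_nonneg (phi_nonneg n t y)]
    exact mul_le_mul_of_nonneg_right (phi_le_two n ht y) (abs_nonneg _)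
  have hFi : Integrable F ((volume : Measure (E n)).prod volume) := by
    rw [integrable_prod_iff hFm]
    constructor
    · refine Filter.Eventually.of_forall fun y => ?_
      simp only [hF]
      simpa using (((hGi.comp_sub_right y).sub hGi).abs).mul_const (|u0 y|)
    · refine hphi_int.congr ?_
      refine Filter.Eventually.of_forall fun y => ?_
      show phi n t y * |u0 y| = ∫ x : E n, ‖F (y, x)‖
      rw [← hslice y]
      congr 1; funext x
      rw [Real.norm_eq_abs, abs_of_nonneg (mul_nonneg (abs_nonneg _) (abs_nonneg _))]
  calc ∫ x : E n, |heatSol n u0 t x - (∫ x : E n, u0 x) * G x|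
      ≤ ∫ x : E n, ∫ y : E n, F (y, x) := by
        refine integral_mono_of_nonneg (Filter.Eventually.of_forall fun x => abs_nonneg _)
          hFi.integral_prod_right (Filter.Eventually.of_forall fun x => hpt x)
    _ = ∫ y : E n, ∫ x : E n, F (y, x) := (integral_integral_swap hFi).symm
    _ = ∫ y : E n, phi n t y * |u0 y| := by
        congr 1; funext y; exact hslice y

end HeatAux

/-- For integrable initial data with mass `M`, the solution of the heat equation on `ℝⁿ`
converges to `M G_t` in `L¹(ℝⁿ)` as `t → ∞`. -/
theorem heat_L1_convergence_to_gaussian (n : ℕ) (hn : 1 ≤ n)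
    (u0 : EuclideanSpace ℝ (Fin n) → ℝ) (hu0 : Integrable u0) (M : ℝ)
    (hM : ∫ x, u0 x = M) :
    Tendsto (fun t : ℝ =>
        ∫ x, |heatSol n u0 t x - M * heatKernel n t x|) atTop (nhds 0) := by
  subst hM
  refine squeeze_zero'
    (g := fun t => ∫ y : EuclideanSpace ℝ (Fin n), HeatAux.phi n t y * |u0 y|)
    (Filter.Eventually.of_forall fun t => integral_nonneg fun x => abs_nonneg _) ?_ ?_
  · filter_upwards [eventually_gt_atTop (0:ℝ)] with t ht
    exact HeatAux.main_ineq n hu0 ht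
  · have hdct := tendsto_integral_filter_of_dominated_convergence
      (μ := (volume : Measure (EuclideanSpace ℝ (Fin n)))) (l := atTop)
      (F := fun t y => HeatAux.phi n t y * |u0 y|) (f := fun _ => (0:ℝ))
      (bound := fun y => 2 * |u0 y|) ?_ ?_ ?_ ?_
    · simpa using hdct
    · exact Filter.Eventually.of_forall fun t =>
        ((HeatAux.phi_stronglyMeasurable n t).aestronglyMeasurable).mul
          hu0.abs.aestronglyMeasurable
    · filter_upwards [eventually_gt_atTop (0:ℝ)] with t ht
      refine Filter.Eventually.of_forall fun y => ?_
      rw [Real.norm_eq_abs, abs_mul, abs_abs, abs_of_nonneg (HeatAux.phi_nonneg n t y)]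
      exact mul_le_mul_of_nonneg_right (HeatAux.phi_le_two n ht y) (abs_nonneg _)
    · exact hu0.abs.const_mul 2
    · refine Filter.Eventually.of_forall fun y => ?_
      simpa using (HeatAux.phi_tendsto n y).mul_const (|u0 y|)
end

section
/- Let $n \ge 1$ and let $u_0 \in L^1(\mathbb{R}^n)$ with $\int_{\mathbb{R}^n} u_0\,dx = M$. Define $u(\cdot,t) = G_t * u_0$ for $t>0$, where $G_t(x) = (4\pi t)^{-n/2} e^{-|x|^2/(4t)}$ is the Gaussian heat kernel. Then $t^{n/2}\,\|u(\cdot,t) - M G_t\|_{L^\infty(\mathbb{R}^n)} \to 0$ as $t \to \infty$. -/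
open Real MeasureTheory Filter

lemma expsq_lipschitz : LipschitzWith 1 (fun s : ℝ => Real.exp (-s ^ 2 / 4)) := by
  apply lipschitzWith_of_nnnorm_deriv_le
  · exact (((differentiable_id.pow 2).neg.div_const 4)).exp
  · intro s
    have h1 : HasDerivAt (fun s : ℝ => -s ^ 2 / 4) (-(2 * s) / 4) s := by
      simpa using ((hasDerivAt_pow 2 s).neg).div_const 4
    have h : HasDerivAt (fun s : ℝ => Real.exp (-s ^ 2 / 4))
        (Real.exp (-s ^ 2 / 4) * (-(2 * s) / 4)) s := h1.exp
    rw [h.deriv]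
    have he : 0 < Real.exp (-s ^ 2 / 4) := Real.exp_pos _
    have he1 : Real.exp (-s ^ 2 / 4) ≤ 1 := by
      rw [Real.exp_le_one_iff]; nlinarith [sq_nonneg s]
    have he2 : Real.exp (-s ^ 2 / 4) * (s ^ 2 / 4) ≤ 1 := by
      have h3 : s ^ 2 / 4 ≤ Real.exp (s ^ 2 / 4) :=
        le_trans (by linarith) (Real.add_one_le_exp _)
      have h4 : Real.exp (-s ^ 2 / 4) = (Real.exp (s ^ 2 / 4))⁻¹ := by
        rw [← Real.exp_neg]; ring_nf
      rw [h4]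
      rw [inv_mul_le_iff₀ (Real.exp_pos _)]
      linarith
    have hb : ‖Real.exp (-s ^ 2 / 4) * (-(2 * s) / 4)‖ ≤ 1 := by
      rw [Real.norm_eq_abs, abs_mul, abs_of_pos he]
      rcases le_or_gt (|s|) 2 with h2 | h2
      · have : |(-(2 * s) / 4)| ≤ 1 := by
          rw [abs_div, abs_neg]
          simp [abs_mul]
          nlinarith [abs_nonneg s]
        nlinarith [abs_nonneg (-(2*s)/4)]
      · have hs2 : |(-(2 * s) / 4)| = |s| / 2 := by
          rw [abs_div, abs_neg, abs_mul]
          simp [abs_two]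
          ring
        rw [hs2]
        have : s ^ 2 = |s| ^ 2 := (sq_abs s).symm
        nlinarith [abs_nonneg s]
    exact_mod_cast hb

lemma heatKernel_eq (n : ℕ) {t : ℝ} (ht : 0 < t) (z : EuclideanSpace ℝ (Fin n)) :
    heatKernel n t z = (4 * π * t) ^ (-(n : ℝ) / 2) *
      Real.exp (-(‖z‖ / Real.sqrt t) ^ 2 / 4) := by
  unfold heatKernel
  congr 2
  rw [div_pow, sq_sqrt ht.le]
  rw [neg_div, neg_div, neg_inj, div_div, mul_comm t 4]

lemma kernel_diff_le (n : ℕ) {t : ℝ} (ht : 0 < t) (x y : EuclideanSpace ℝ (Fin n)) :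
    |heatKernel n t (x - y) - heatKernel n t x| ≤
      (4 * π * t) ^ (-(n : ℝ) / 2) * min 2 (‖y‖ / Real.sqrt t) := by
  have hc : (0:ℝ) < (4 * π * t) ^ (-(n : ℝ) / 2) :=
    Real.rpow_pos_of_pos (by positivity) _
  rw [heatKernel_eq n ht, heatKernel_eq n ht, ← mul_sub, abs_mul, abs_of_pos hc]
  gcongr
  set a := ‖x - y‖ / Real.sqrt t
  set b := ‖x‖ / Real.sqrt t
  apply le_min
  · have h1 : Real.exp (-a ^ 2 / 4) ≤ 1 := by
      rw [Real.exp_le_one_iff]; nlinarith [sq_nonneg a]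
    have h2 : Real.exp (-b ^ 2 / 4) ≤ 1 := by
      rw [Real.exp_le_one_iff]; nlinarith [sq_nonneg b]
    have := Real.exp_pos (-a ^ 2 / 4)
    have := Real.exp_pos (-b ^ 2 / 4)
    rw [abs_sub_le_iff]; constructor <;> linarith
  · have hl := expsq_lipschitz.dist_le_mul a b
    rw [Real.dist_eq, Real.dist_eq] at hl
    simp only [NNReal.coe_one, one_mul] at hl
    refine hl.trans ?_
    have : a - b = (‖x - y‖ - ‖x‖) / Real.sqrt t := by
      simp [a, b, sub_div]
    rw [this, abs_div, abs_of_pos (Real.sqrt_pos.mpr ht)]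
    gcongr
    calc |‖x - y‖ - ‖x‖| ≤ ‖(x - y) - x‖ := abs_norm_sub_norm_le _ _
      _ = ‖y‖ := by simp

lemma sqrt_tendsto_atTop : Tendsto Real.sqrt atTop atTop := by
  have := tendsto_rpow_atTop (by norm_num : (0:ℝ) < 1/2)
  refine this.congr' ?_
  filter_upwards [eventually_ge_atTop (0:ℝ)] with t ht
  rw [← Real.sqrt_eq_rpow]

lemma div_sqrt_tendsto (y : ℝ) : Tendsto (fun t : ℝ => y / Real.sqrt t) atTop (nhds 0) := by
  simp only [div_eq_mul_inv]
  simpa using (sqrt_tendsto_atTop.inv_tendsto_atTop).const_mul y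

/-- For integrable initial data with mass `M`, the solution of the heat equation on `ℝⁿ`
satisfies `t^(n/2) ‖u(·,t) - M G_t‖_∞ → 0` as `t → ∞`. -/
theorem heat_sup_convergence_to_gaussian (n : ℕ) (hn : 1 ≤ n)
    (u0 : EuclideanSpace ℝ (Fin n) → ℝ) (hu0 : Integrable u0) (M : ℝ)
    (hM : ∫ x, u0 x = M) :
    Tendsto (fun t : ℝ =>
        ENNReal.ofReal (t ^ ((n : ℝ) / 2)) *
          eLpNorm (fun x : EuclideanSpace ℝ (Fin n) =>
            heatSol n u0 t x - M * heatKernel n t x) ⊤ volume)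
      atTop (nhds 0) := by
  set I : ℝ → ℝ := fun t => ∫ y, min 2 (‖y‖ / Real.sqrt t) * ‖u0 y‖ with hIdef
  -- dominated convergence
  have hmin_nonneg : ∀ (t : ℝ) (y : EuclideanSpace ℝ (Fin n)),
      0 ≤ min 2 (‖y‖ / Real.sqrt t) := fun t y =>
    le_min (by norm_num) (div_nonneg (norm_nonneg _) (Real.sqrt_nonneg _))
  have hmin_le : ∀ (t : ℝ) (y : EuclideanSpace ℝ (Fin n)),
      min 2 (‖y‖ / Real.sqrt t) ≤ 2 := fun t y => min_le_left _ _
  have hcont : ∀ t : ℝ, Continuous (fun y : EuclideanSpace ℝ (Fin n) =>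
      min 2 (‖y‖ / Real.sqrt t)) := fun t =>
    continuous_const.min (continuous_norm.div_const _)
  have hImeas : ∀ t : ℝ, AEStronglyMeasurable
      (fun y : EuclideanSpace ℝ (Fin n) => min 2 (‖y‖ / Real.sqrt t) * ‖u0 y‖) volume :=
    fun t => ((hcont t).aestronglyMeasurable).mul hu0.aestronglyMeasurable.norm
  have hIint : ∀ t : ℝ, Integrable
      (fun y : EuclideanSpace ℝ (Fin n) => min 2 (‖y‖ / Real.sqrt t) * ‖u0 y‖) volume :=
    fun t => hu0.norm.bdd_mul (c := 2) ((hcont t).aestronglyMeasurable)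
      (ae_of_all _ fun y => by rw [Real.norm_eq_abs, abs_of_nonneg (hmin_nonneg t y)]; exact hmin_le t y)
  have hI : Tendsto I atTop (nhds 0) := by
    have h0 : (0:ℝ) = ∫ y : EuclideanSpace ℝ (Fin n), (0:ℝ) := by simp
    rw [hIdef, h0]
    apply tendsto_integral_filter_of_dominated_convergence
      (bound := fun y => 2 * ‖u0 y‖)
    · exact Eventually.of_forall hImeas
    · refine Eventually.of_forall fun t => Eventually.of_forall fun y => ?_
      rw [Real.norm_eq_abs, abs_mul, abs_of_nonneg (hmin_nonneg t y), abs_norm]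
      exact mul_le_mul_of_nonneg_right (hmin_le t y) (norm_nonneg _)
    · exact hu0.norm.const_mul 2
    · refine Eventually.of_forall fun y => ?_
      have h1 : Tendsto (fun t : ℝ => min 2 (‖y‖ / Real.sqrt t)) atTop (nhds 0) := by
        have := tendsto_const_nhds (x := (2:ℝ)) (f := atTop (α := ℝ)) |>.min
          (div_sqrt_tendsto ‖y‖)
        simpa using this
      simpa using h1.mul_const ‖u0 y‖
  -- key bound
  have key : ∀ t : ℝ, 0 < t →
      ENNReal.ofReal (t ^ ((n : ℝ) / 2)) *
        eLpNorm (fun x : EuclideanSpace ℝ (Fin n) =>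
          heatSol n u0 t x - M * heatKernel n t x) ⊤ volume ≤
        ENNReal.ofReal ((4 * π) ^ (-(n : ℝ) / 2) * I t) := by
    intro t ht
    set c : ℝ := (4 * π * t) ^ (-(n : ℝ) / 2) with hcdef
    have hc : 0 < c := Real.rpow_pos_of_pos (by positivity) _
    have hKcont : Continuous (heatKernel n t) := by
      unfold heatKernel
      exact continuous_const.mul (((continuous_norm.pow 2).neg.div_const _).rexp)
    have hKbd : ∀ z : EuclideanSpace ℝ (Fin n), ‖heatKernel n t z‖ ≤ c := by
      intro z
      rw [Real.norm_eq_abs]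
      unfold heatKernel
      rw [abs_mul, abs_of_pos hc]
      have h1 : Real.exp (-‖z‖ ^ 2 / (4 * t)) ≤ 1 := by
        rw [Real.exp_le_one_iff]
        apply div_nonpos_of_nonpos_of_nonneg <;> [nlinarith [sq_nonneg ‖z‖]; positivity]
      rw [abs_of_pos (Real.exp_pos _)]
      nlinarith
    have hint1 : ∀ x : EuclideanSpace ℝ (Fin n),
        Integrable (fun y => heatKernel n t (x - y) * u0 y) volume := fun x =>
      hu0.bdd_mul (c := c) ((hKcont.comp (continuous_const.sub continuous_id)).aestronglyMeasurable)
        (ae_of_all _ fun y => hKbd _)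
    -- pointwise bound
    have hpt : ∀ x : EuclideanSpace ℝ (Fin n),
        ‖heatSol n u0 t x - M * heatKernel n t x‖ ≤ c * I t := by
      intro x
      have h2 : M * heatKernel n t x = ∫ y, heatKernel n t x * u0 y := by
        rw [integral_const_mul, hM, mul_comm]
      rw [heatSol, h2, ← integral_sub (hint1 x) (hu0.const_mul _)]
      calc ‖∫ y, (heatKernel n t (x - y) * u0 y - heatKernel n t x * u0 y)‖
          ≤ ∫ y, ‖heatKernel n t (x - y) * u0 y - heatKernel n t x * u0 y‖ :=
            norm_integral_le_integral_norm _
        _ ≤ ∫ y, c * (min 2 (‖y‖ / Real.sqrt t) * ‖u0 y‖) := by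
            apply integral_mono_of_nonneg (Eventually.of_forall fun y => norm_nonneg _)
              ((hIint t).const_mul c)
            refine Eventually.of_forall fun y => ?_
            show ‖heatKernel n t (x - y) * u0 y - heatKernel n t x * u0 y‖ ≤
              c * (min 2 (‖y‖ / Real.sqrt t) * ‖u0 y‖)
            rw [← sub_mul, Real.norm_eq_abs, abs_mul, ← mul_assoc]
            exact mul_le_mul_of_nonneg_right (kernel_diff_le n ht x y) (abs_nonneg _)
        _ = c * I t := integral_const_mul _ _
    have hsn : eLpNorm (fun x : EuclideanSpace ℝ (Fin n) =>
        heatSol n u0 t x - M * heatKernel n t x) ⊤ volume ≤ ENNReal.ofReal (c * I t) := by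
      rw [eLpNorm_exponent_top]
      exact eLpNormEssSup_le_of_ae_bound (ae_of_all _ hpt)
    calc ENNReal.ofReal (t ^ ((n : ℝ) / 2)) *
          eLpNorm (fun x : EuclideanSpace ℝ (Fin n) =>
            heatSol n u0 t x - M * heatKernel n t x) ⊤ volume
        ≤ ENNReal.ofReal (t ^ ((n : ℝ) / 2)) * ENNReal.ofReal (c * I t) :=
          mul_le_mul_right hsn _
      _ = ENNReal.ofReal (t ^ ((n : ℝ) / 2) * (c * I t)) :=
          (ENNReal.ofReal_mul (by positivity)).symm
      _ = ENNReal.ofReal ((4 * π) ^ (-(n : ℝ) / 2) * I t) := by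
          congr 1
          have hsplit : c = (4 * π) ^ (-(n : ℝ) / 2) * t ^ (-(n : ℝ) / 2) := by
            rw [hcdef, Real.mul_rpow (by positivity) ht.le]
          rw [hsplit]
          have : t ^ ((n : ℝ) / 2) * t ^ (-(n : ℝ) / 2) = 1 := by
            rw [← Real.rpow_add ht, neg_div, add_neg_cancel, Real.rpow_zero]
          calc t ^ ((n : ℝ) / 2) * ((4 * π) ^ (-(n : ℝ) / 2) * t ^ (-(n : ℝ) / 2) * I t)
              = (t ^ ((n : ℝ) / 2) * t ^ (-(n : ℝ) / 2)) * ((4 * π) ^ (-(n : ℝ) / 2) * I t) := by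
                ring
            _ = (4 * π) ^ (-(n : ℝ) / 2) * I t := by rw [this, one_mul]
  -- squeeze
  have hupper : Tendsto (fun t => ENNReal.ofReal ((4 * π) ^ (-(n : ℝ) / 2) * I t))
      atTop (nhds 0) := by
    have := (ENNReal.tendsto_ofReal (hI.const_mul ((4 * π) ^ (-(n : ℝ) / 2))))
    simpa using this
  refine tendsto_of_tendsto_of_tendsto_of_le_of_le' tendsto_const_nhds hupper
    (Eventually.of_forall fun t => zero_le) ?_
  filter_upwards [eventually_gt_atTop (0:ℝ)] with t ht
  exact key t ht
end

section
/- Let $n \ge 1$ and let $u_0 \in L^1(\mathbb{R}^n)$ be compactly supported, with $\int_{\mathbb{R}^n} u_0\,dx = M$ and with center of mass at the origin, i.e. $\int_{\mathbb{R}^n} x\, u_0(x)\,dx = 0$. Define $u(\cdot,t) = G_t * u_0$ for $t>0$, where $G_t(x) = (4\pi t)^{-n/2} e^{-|x|^2/(4t)}$. Then there exists a constant $C>0$ such that $\|u(\cdot,t) - M G_t\|_{L^1(\mathbb{R}^n)} \le C\, t^{-1}$ for all $t \ge 1$. -/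
set_option maxHeartbeats 1000000

open Real MeasureTheory Filter

lemma integrable_gauss (n : ℕ) {b : ℝ} (hb : 0 < b) :
    Integrable (fun x : EuclideanSpace ℝ (Fin n) => Real.exp (-b * ‖x‖^2)) := by
  have h := (GaussianFourier.integrable_cexp_neg_mul_sq_norm_add
    (V := EuclideanSpace ℝ (Fin n)) (b := (b : ℂ)) (by simpa using hb) 0 0).norm
  refine h.congr (Eventually.of_forall fun x => ?_)
  simp [Complex.norm_exp]
  left; norm_cast

lemma integral_gauss (n : ℕ) {b : ℝ} (hb : 0 < b) :
    ∫ x : EuclideanSpace ℝ (Fin n), Real.exp (-b * ‖x‖^2) = (π/b) ^ ((n : ℝ)/2) := by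
  have := GaussianFourier.integral_rexp_neg_mul_sq_norm (V := EuclideanSpace ℝ (Fin n)) hb
  rw [this]
  norm_num [finrank_euclideanSpace_fin]

lemma key (n : ℕ) {t : ℝ} (ht : 1 ≤ t) (x y : EuclideanSpace ℝ (Fin n)) {R : ℝ} (hR : 0 ≤ R)
    (hy : ‖y‖ ≤ R) :
    |heatKernel n t (x - y) - heatKernel n t x -
        (inner ℝ x y : ℝ)/(2*t) * heatKernel n t x|
      ≤ ‖y‖^2 * (Real.exp (R^2/4) * ((1/(2*t) + (‖x‖^2 + R^2)/(2*t^2)) *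
          ((4*π*t) ^ (-(n:ℝ)/2) * Real.exp (-‖x‖^2/(8*t))))) := by
  have ht0 : (0:ℝ) < t := lt_of_lt_of_le one_pos ht
  set c : ℝ := (4*π*t) ^ (-(n:ℝ)/2) with hcdef
  have hc : 0 < c := by rw [hcdef]; positivity
  set a : ℝ := ‖x‖^2 with hadef
  set b : ℝ := (inner ℝ x y : ℝ) with hbdef
  set d : ℝ := ‖y‖^2 with hddef
  have ha : 0 ≤ a := by positivity
  have hd : 0 ≤ d := by positivity
  have hnorm : ∀ s : ℝ, ‖x - s•y‖^2 = a - 2*b*s + d*s^2 := by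
    intro s
    rw [norm_sub_sq_real, real_inner_smul_right, norm_smul]
    simp only [Real.norm_eq_abs, mul_pow, sq_abs, hadef, hbdef, hddef]
    ring
  set g : ℝ → ℝ := fun s => c * Real.exp ((2*b*s - a - d*s^2)/(4*t)) with hgdef
  set g1 : ℝ → ℝ := fun s => (b - d*s)/(2*t) * g s with hg1def
  set g2 : ℝ → ℝ := fun s => ((b - d*s)/(2*t))^2 * g s - d/(2*t) * g s with hg2def
  have hgpos : ∀ s, 0 < g s := fun s => by positivity
  have hgk : ∀ s : ℝ, heatKernel n t (x - s•y) = g s := by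
    intro s
    rw [heatKernel, hgdef]
    congr 1
    rw [hnorm]
    ring
  have hder1 : ∀ s, HasDerivAt g (g1 s) s := by
    intro s
    have h1 := ((((hasDerivAt_id s).const_mul (2*b)).sub_const a).sub
        ((hasDerivAt_pow 2 s).const_mul d)).div_const (4*t)
    have h2 := (h1.exp).const_mul c
    refine h2.congr_deriv ?_
    simp only [hg1def, hgdef, id_eq]
    norm_num
    ring
  have hder2 : ∀ s, HasDerivAt g1 (g2 s) s := by
    intro s
    have h1 : HasDerivAt (fun s : ℝ => (b - d*s)/(2*t)) ((-d)/(2*t)) s := by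
      have := (((hasDerivAt_id s).const_mul d).const_sub b).div_const (2*t)
      simpa using this
    have := h1.mul (hder1 s)
    refine this.congr_deriv ?_
    simp only [hg2def, hg1def]
    ring
  have contg : Continuous g := by fun_prop
  have contg1 : Continuous g1 := by fun_prop
  have contg2 : Continuous g2 := by fun_prop
  set Q : ℝ := d * (Real.exp (R^2/4) * ((1/(2*t) + (a + R^2)/(2*t^2)) *
      (c * Real.exp (-a/(8*t))))) with hQdef
  have hQ0 : 0 ≤ Q := by positivity
  have hg2bound : ∀ r ∈ Set.uIcc (0:ℝ) 1, |g2 r| ≤ Q := by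
    intro r hr
    rw [Set.uIcc_of_le (by norm_num : (0:ℝ) ≤ 1)] at hr
    obtain ⟨hr0, hr1⟩ := hr
    set N : ℝ := ‖x - r•y‖ with hNdef
    have hN0 : 0 ≤ N := norm_nonneg _
    have hry : ‖r•y‖ ≤ R := by
      rw [norm_smul, Real.norm_eq_abs, abs_of_nonneg hr0]
      calc r * ‖y‖ ≤ 1 * R := mul_le_mul hr1 hy (norm_nonneg _) zero_le_one
        _ = R := one_mul R
    have hNa : ‖x‖ ≤ N + R := by
      calc ‖x‖ = ‖(x - r•y) + r•y‖ := by rw [sub_add_cancel]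
        _ ≤ N + ‖r•y‖ := norm_add_le _ _
        _ ≤ N + R := by linarith
    have hNb : N ≤ ‖x‖ + R := by
      calc N ≤ ‖x‖ + ‖r•y‖ := norm_sub_le _ _
        _ ≤ ‖x‖ + R := by linarith
    have hN2 : N^2 ≤ 2*a + 2*R^2 := by
      rw [hadef]
      nlinarith [mul_self_le_mul_self hN0 hNb, sq_nonneg (‖x‖ - R)]
    have haN : a ≤ 2*N^2 + 2*R^2 := by
      rw [hadef]
      nlinarith [mul_self_le_mul_self (norm_nonneg x) hNa, sq_nonneg (N - R)]
    have hgr : g r = c * Real.exp (-(N^2)/(4*t)) := by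
      simp only [hgdef, hNdef]
      congr 1
      rw [hnorm]
      ring
    have hexp : Real.exp (-(N^2)/(4*t)) ≤ Real.exp (R^2/4) * Real.exp (-a/(8*t)) := by
      rw [← Real.exp_add]
      apply Real.exp_le_exp.2
      rw [div_add_div _ _ (by norm_num : (4:ℝ) ≠ 0) (by positivity : (8*t:ℝ) ≠ 0),
        div_le_div_iff₀ (by positivity) (by positivity)]
      have h1 : (1:ℝ) ≤ t := ht
      nlinarith [mul_le_mul_of_nonneg_left h1 (mul_nonneg hR hR), haN, ht0.le,
        mul_nonneg (mul_nonneg hR hR) (sub_nonneg.2 ht)]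
    have hgrb : g r ≤ c * (Real.exp (R^2/4) * Real.exp (-a/(8*t))) := by
      rw [hgr]
      exact mul_le_mul_of_nonneg_left hexp hc.le
    have hbd : |b - d*r| ≤ N * ‖y‖ := by
      have hEq : b - d*r = (inner ℝ (x - r•y) y : ℝ) := by
        rw [inner_sub_left, real_inner_smul_left, real_inner_self_eq_norm_sq, hbdef, hddef]
        ring
      rw [hEq, hNdef]
      exact abs_real_inner_le_norm _ _
    have hterm1 : ((b - d*r)/(2*t))^2 ≤ N^2*d/(4*t^2) := by
      rw [div_pow]
      have h1 : (b - d*r)^2 ≤ (N*‖y‖)^2 := by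
        rw [← sq_abs (b - d*r)]
        have := mul_self_le_mul_self (abs_nonneg (b - d*r)) hbd
        calc |b - d*r|^2 = |b - d*r| * |b - d*r| := by rw [sq]
          _ ≤ (N*‖y‖) * (N*‖y‖) := this
          _ = (N*‖y‖)^2 := by ring
      have h2 : (N*‖y‖)^2 = N^2*d := by rw [hddef]; ring
      have h3 : ((2:ℝ)*t)^2 = 4*t^2 := by ring
      rw [h3, ← h2]
      exact (div_le_div_iff_of_pos_right (by positivity)).2 h1
    set E : ℝ := c * (Real.exp (R^2/4) * Real.exp (-a/(8*t))) with hEdef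
    have hE0 : 0 ≤ E := mul_nonneg hc.le (by positivity)
    have hgrb' : g r ≤ E := by rw [hEdef]; exact hgrb
    have habs : |g2 r| ≤ ((b - d*r)/(2*t))^2 * g r + d/(2*t) * g r := by
      simp only [hg2def]
      refine (abs_sub _ _).trans ?_
      rw [abs_of_nonneg (mul_nonneg (sq_nonneg _) (hgpos r).le),
        abs_of_nonneg (mul_nonneg (by positivity) (hgpos r).le)]
    calc |g2 r| ≤ ((b - d*r)/(2*t))^2 * g r + d/(2*t) * g r := habs
      _ ≤ (N^2*d/(4*t^2)) * E + d/(2*t) * E :=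
          add_le_add (mul_le_mul hterm1 hgrb' (hgpos r).le (by positivity))
            (mul_le_mul_of_nonneg_left hgrb' (by positivity))
      _ ≤ ((2*a+2*R^2)*d/(4*t^2)) * E + d/(2*t) * E := by
          refine add_le_add_left (mul_le_mul_of_nonneg_right ?_ hE0) _
          apply (div_le_div_iff_of_pos_right (by positivity)).2
          exact mul_le_mul_of_nonneg_right hN2 hd
      _ = Q := by rw [hQdef, hEdef]; ring
  -- FTC part
  have hFTC1 : ∫ s in (0:ℝ)..1, g1 s = g 1 - g 0 :=
    intervalIntegral.integral_eq_sub_of_hasDerivAt (fun s _ => hder1 s)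
      (contg1.intervalIntegrable 0 1)
  have hFTC2 : ∀ s : ℝ, ∫ r in (0:ℝ)..s, g2 r = g1 s - g1 0 := fun s =>
    intervalIntegral.integral_eq_sub_of_hasDerivAt (fun r _ => hder2 r)
      (contg2.intervalIntegrable 0 s)
  have hmain : g 1 - g 0 - g1 0 = ∫ s in (0:ℝ)..1, (g1 s - g1 0) := by
    rw [intervalIntegral.integral_sub (contg1.intervalIntegrable 0 1)
      (intervalIntegrable_const), hFTC1, intervalIntegral.integral_const]
    simp
  have hrem : |g 1 - g 0 - g1 0| ≤ Q := by
    rw [hmain, ← Real.norm_eq_abs]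
    have h := intervalIntegral.norm_integral_le_of_norm_le_const
      (C := Q) (a := (0:ℝ)) (b := 1) (f := fun s => g1 s - g1 0) ?_
    · simpa using h
    · intro s hs
      rw [Set.uIoc_of_le (by norm_num : (0:ℝ) ≤ 1)] at hs
      have hs0 : 0 ≤ s := hs.1.le
      have hs1 : s ≤ 1 := hs.2
      have h2 : ‖g1 s - g1 0‖ ≤ Q * |s - 0| := by
        rw [← hFTC2 s]
        apply intervalIntegral.norm_integral_le_of_norm_le_const
        intro r hr
        rw [Set.uIoc_of_le hs0] at hr
        have hmem : r ∈ Set.uIcc (0:ℝ) 1 := by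
          rw [Set.uIcc_of_le (by norm_num : (0:ℝ) ≤ 1)]
          exact ⟨hr.1.le, hr.2.trans hs1⟩
        simpa [Real.norm_eq_abs] using hg2bound r hmem
      calc ‖g1 s - g1 0‖ ≤ Q * |s - 0| := h2
        _ ≤ Q := by
            rw [sub_zero, abs_of_nonneg hs0]
            nlinarith
  have h1s : x - (1:ℝ)•y = x - y := by rw [one_smul]
  have h0s : x - (0:ℝ)•y = x := by rw [zero_smul, sub_zero]
  have e1 : heatKernel n t (x - y) = g 1 := by rw [← h1s]; exact hgk 1
  have e0 : heatKernel n t x = g 0 := by rw [← h0s]; exact hgk 0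
  have e2 : b/(2*t) * g 0 = g1 0 := by simp [hg1def]
  rw [e1, e0, e2]
  exact hrem

/-- For compactly supported integrable initial data with mass `M` and center of mass at
the origin, the solution of the heat equation on `ℝⁿ` converges to `M G_t` in `L¹` with
rate `O(t⁻¹)`. -/
theorem heat_L1_convergence_rate (n : ℕ) (hn : 1 ≤ n)
    (u0 : EuclideanSpace ℝ (Fin n) → ℝ) (hu0 : Integrable u0)
    (hsupp : HasCompactSupport u0) (M : ℝ) (hM : ∫ x, u0 x = M)
    (hcenter : ∫ x, u0 x • x = (0 : EuclideanSpace ℝ (Fin n))) :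
    ∃ C > 0, ∀ t ≥ (1 : ℝ),
      (∫ x, |heatSol n u0 t x - M * heatKernel n t x|) ≤ C / t := by
  obtain ⟨r0, hr0⟩ := hsupp.isBounded.subset_closedBall 0
  set R : ℝ := max r0 0 with hRdef
  have hR : 0 ≤ R := le_max_right _ _
  have hsupp' : ∀ y, u0 y ≠ 0 → ‖y‖ ≤ R := by
    intro y hy
    have h1 : y ∈ tsupport u0 := subset_tsupport u0 (by simpa [Function.mem_support] using hy)
    have h2 := hr0 h1
    simp only [Metric.mem_closedBall, dist_zero_right] at h2
    exact h2.trans (le_max_left _ _)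
  have hint : Integrable (fun y => u0 y • y) := by
    refine Integrable.mono' (hu0.norm.const_mul R) ?_ ?_
    · exact hu0.aestronglyMeasurable.smul aestronglyMeasurable_id
    · refine Eventually.of_forall fun y => ?_
      rw [norm_smul, Real.norm_eq_abs]
      by_cases h : u0 y = 0
      · simp [h]
      · calc |u0 y| * ‖y‖ ≤ |u0 y| * R := mul_le_mul_of_nonneg_left (hsupp' y h) (abs_nonneg _)
          _ = R * ‖u0 y‖ := by rw [Real.norm_eq_abs]; ring
  have hm2i : Integrable (fun y => |u0 y| * ‖y‖^2) := by
    refine Integrable.mono' (hu0.norm.const_mul (R^2)) ?_ ?_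
    · exact (hu0.aestronglyMeasurable.norm.mul
        ((continuous_norm.pow 2).aestronglyMeasurable))
    · refine Eventually.of_forall fun y => ?_
      rw [Real.norm_eq_abs, abs_of_nonneg (by positivity : (0:ℝ) ≤ |u0 y| * ‖y‖^2)]
      by_cases h : u0 y = 0
      · simp [h]
      · have hyR := hsupp' y h
        calc |u0 y| * ‖y‖^2 ≤ |u0 y| * R^2 := by
              refine mul_le_mul_of_nonneg_left ?_ (abs_nonneg _)
              exact pow_le_pow_left₀ (norm_nonneg _) hyR 2
          _ = R^2 * ‖u0 y‖ := by rw [Real.norm_eq_abs]; ring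
  set m2 : ℝ := ∫ y, |u0 y| * ‖y‖^2 with hm2def
  have hm2nonneg : 0 ≤ m2 := integral_nonneg fun y => by positivity
  set κ : ℝ := Real.exp (R^2/4) * ((1/2 + R^2/2) * 2^((n:ℝ)/2) + 16 * 2^((n:ℝ))) with hκdef
  have hκpos : 0 < κ := by positivity
  refine ⟨m2 * κ + 1, by positivity, ?_⟩
  intro t ht
  have ht0 : (0:ℝ) < t := lt_of_lt_of_le one_pos ht
  set c : ℝ := (4*π*t) ^ (-(n:ℝ)/2) with hcdef
  have hc : 0 < c := by rw [hcdef]; positivity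
  set Ψ : EuclideanSpace ℝ (Fin n) → ℝ := fun x =>
    Real.exp (R^2/4) * ((1/(2*t) + (‖x‖^2 + R^2)/(2*t^2)) *
      (c * Real.exp (-‖x‖^2/(8*t)))) with hΨdef
  have hΨ0 : ∀ x, 0 ≤ Ψ x := fun x =>
    mul_nonneg (Real.exp_pos _).le (mul_nonneg (by positivity)
      (mul_nonneg hc.le (Real.exp_pos _).le))
  have hb8 : (0:ℝ) < 1/(8*t) := by positivity
  have hb16 : (0:ℝ) < 1/(16*t) := by positivity
  have hgauss8 := integrable_gauss n hb8
  have hgauss16 := integrable_gauss n hb16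
  have hptq : ∀ x : EuclideanSpace ℝ (Fin n),
      ‖x‖^2 * Real.exp (-(1/(8*t)) * ‖x‖^2) ≤ 16*t * Real.exp (-(1/(16*t)) * ‖x‖^2) := by
    intro x
    set u : ℝ := ‖x‖^2/(16*t) with hudef
    have hu : 0 ≤ u := by positivity
    have h2 : u ≤ Real.exp u := by
      have := Real.add_one_le_exp u
      linarith
    have h1 : u * Real.exp (-u) ≤ 1 := by
      have h3 : u * Real.exp (-u) ≤ Real.exp u * Real.exp (-u) :=
        mul_le_mul_of_nonneg_right h2 (Real.exp_pos _).le
      rwa [← Real.exp_add, add_neg_cancel, Real.exp_zero] at h3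
    have e8 : Real.exp (-(1/(8*t)) * ‖x‖^2) = Real.exp (-u) * Real.exp (-u) := by
      rw [← Real.exp_add]
      congr 1
      rw [hudef]
      field_simp
      ring
    have e16 : Real.exp (-(1/(16*t)) * ‖x‖^2) = Real.exp (-u) := by
      congr 1
      rw [hudef]
      field_simp
    have exn : ‖x‖^2 = 16*t*u := by rw [hudef]; field_simp
    rw [e8, e16, exn]
    calc 16*t*u * (Real.exp (-u) * Real.exp (-u))
        = 16*t * ((u * Real.exp (-u)) * Real.exp (-u)) := by ring
      _ ≤ 16*t * (1 * Real.exp (-u)) := by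
          refine mul_le_mul_of_nonneg_left ?_ (by positivity)
          exact mul_le_mul_of_nonneg_right h1 (Real.exp_pos _).le
      _ = 16*t * Real.exp (-u) := by ring
  have hmoment : Integrable
      (fun x : EuclideanSpace ℝ (Fin n) => ‖x‖^2 * Real.exp (-(1/(8*t)) * ‖x‖^2)) := by
    refine Integrable.mono' (hgauss16.const_mul (16*t)) ?_ (Eventually.of_forall fun x => ?_)
    · exact (continuous_norm.pow 2).aestronglyMeasurable.mul
        (by fun_prop : Continuous fun x : EuclideanSpace ℝ (Fin n) =>
          Real.exp (-(1/(8*t)) * ‖x‖^2)).aestronglyMeasurable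
    · rw [Real.norm_eq_abs, abs_of_nonneg (by positivity)]
      exact hptq x
  set A : ℝ := Real.exp (R^2/4) * c * (1/(2*t) + R^2/(2*t^2)) with hAdef
  set B : ℝ := Real.exp (R^2/4) * c / (2*t^2) with hBdef
  have hA0 : 0 ≤ A := by
    rw [hAdef]
    exact mul_nonneg (mul_nonneg (Real.exp_pos _).le hc.le) (by positivity)
  have hB0 : 0 ≤ B := by
    rw [hBdef]
    positivity
  have hΨeq : Ψ = fun x => A * Real.exp (-(1/(8*t)) * ‖x‖^2)
      + B * (‖x‖^2 * Real.exp (-(1/(8*t)) * ‖x‖^2)) := by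
    funext x
    simp only [hΨdef, hAdef, hBdef]
    rw [show -‖x‖^2/(8*t) = -(1/(8*t)) * ‖x‖^2 by ring]
    field_simp
    ring
  have hΨint : Integrable Ψ := by
    rw [hΨeq]
    exact (hgauss8.const_mul A).add (hmoment.const_mul B)
  -- the integral of Ψ
  have hcancel : c * (4*π*t)^((n:ℝ)/2) = 1 := by
    rw [hcdef, ← Real.rpow_add (by positivity)]
    rw [show -(n:ℝ)/2 + (n:ℝ)/2 = 0 by ring, Real.rpow_zero]
  have key1 : c * (π/(1/(8*t)))^((n:ℝ)/2) = 2^((n:ℝ)/2) := by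
    have h1 : π/(1/(8*t)) = 2*(4*π*t) := by field_simp; ring
    rw [h1, Real.mul_rpow (by norm_num) (by positivity), ← mul_assoc,
      mul_comm c, mul_assoc, hcancel, mul_one]
  have key2 : c * (π/(1/(16*t)))^((n:ℝ)/2) = 2^((n:ℝ)) := by
    have h1 : π/(1/(16*t)) = 4*(4*π*t) := by field_simp; ring
    rw [h1, Real.mul_rpow (by norm_num) (by positivity), ← mul_assoc,
      mul_comm c, mul_assoc, hcancel, mul_one]
    have h4 : (4:ℝ) = (2:ℝ)^(2:ℝ) := by
      rw [show (2:ℝ) = ((2:ℕ):ℝ) by norm_num, Real.rpow_natCast]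
      norm_num
    rw [h4, ← Real.rpow_mul (by norm_num)]
    congr 1
    ring
  have hq : (∫ x : EuclideanSpace ℝ (Fin n), ‖x‖^2 * Real.exp (-(1/(8*t)) * ‖x‖^2))
      ≤ 16*t * (π/(1/(16*t)))^((n:ℝ)/2) := by
    calc (∫ x : EuclideanSpace ℝ (Fin n), ‖x‖^2 * Real.exp (-(1/(8*t)) * ‖x‖^2))
        ≤ ∫ x : EuclideanSpace ℝ (Fin n), 16*t * Real.exp (-(1/(16*t)) * ‖x‖^2) :=
          integral_mono hmoment (hgauss16.const_mul (16*t)) hptq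
      _ = 16*t * (π/(1/(16*t)))^((n:ℝ)/2) := by
          rw [integral_const_mul, integral_gauss n hb16]
  have hIψ : ∫ x, Ψ x ≤ κ / t := by
    have hsplit : ∫ x, Ψ x = A * (π/(1/(8*t)))^((n:ℝ)/2)
        + B * ∫ x : EuclideanSpace ℝ (Fin n), ‖x‖^2 * Real.exp (-(1/(8*t)) * ‖x‖^2) := by
      rw [hΨeq, integral_add (hgauss8.const_mul A) (hmoment.const_mul B),
        integral_const_mul, integral_const_mul, integral_gauss n hb8]
    have hAP : A * (π/(1/(8*t)))^((n:ℝ)/2)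
        = Real.exp (R^2/4) * ((1/(2*t) + R^2/(2*t^2)) * 2^((n:ℝ)/2)) := by
      rw [hAdef, ← key1]; ring
    have hBP : B * (16*t * (π/(1/(16*t)))^((n:ℝ)/2))
        = Real.exp (R^2/4) * ((8/t) * 2^((n:ℝ))) := by
      rw [hBdef, ← key2]; field_simp; ring
    have hp0 : (0:ℝ) ≤ 2^((n:ℝ)/2) := by positivity
    have hq0 : (0:ℝ) ≤ 2^((n:ℝ)) := by positivity
    have hα : 1/(2*t) + R^2/(2*t^2) ≤ (1/2 + R^2/2)/t := by
      have heq : (1/2 + R^2/2)/t - (1/(2*t) + R^2/(2*t^2)) = (R^2*(t-1))/(2*t^2) := by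
        field_simp; ring
      have hpos : 0 ≤ (R^2*(t-1))/(2*t^2) :=
        div_nonneg (mul_nonneg (sq_nonneg R) (by linarith)) (by positivity)
      linarith
    have h8 : (8:ℝ)/t ≤ 16/t := (div_le_div_iff_of_pos_right ht0).2 (by norm_num)
    calc ∫ x, Ψ x
        = A * (π/(1/(8*t)))^((n:ℝ)/2)
            + B * ∫ x : EuclideanSpace ℝ (Fin n), ‖x‖^2 * Real.exp (-(1/(8*t)) * ‖x‖^2) :=
          hsplit
      _ ≤ A * (π/(1/(8*t)))^((n:ℝ)/2) + B * (16*t * (π/(1/(16*t)))^((n:ℝ)/2)) :=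
          add_le_add_right (mul_le_mul_of_nonneg_left hq hB0) _
      _ = Real.exp (R^2/4) * ((1/(2*t) + R^2/(2*t^2)) * 2^((n:ℝ)/2))
            + Real.exp (R^2/4) * ((8/t) * 2^((n:ℝ))) := by rw [hAP, hBP]
      _ ≤ Real.exp (R^2/4) * (((1/2 + R^2/2)/t) * 2^((n:ℝ)/2))
            + Real.exp (R^2/4) * ((16/t) * 2^((n:ℝ))) := by
          refine add_le_add ?_ ?_
          · exact mul_le_mul_of_nonneg_left (mul_le_mul_of_nonneg_right hα hp0)
              (Real.exp_pos _).le
          · exact mul_le_mul_of_nonneg_left (mul_le_mul_of_nonneg_right h8 hq0)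
              (Real.exp_pos _).le
      _ = κ / t := by rw [hκdef]; field_simp
  -- pointwise bound
  have hpt : ∀ x, |heatSol n u0 t x - M * heatKernel n t x| ≤ m2 * Ψ x := by
    intro x
    have I1 : Integrable (fun y => heatKernel n t (x - y) * u0 y) := by
      refine hu0.bdd_mul (c := c) ?_ (Eventually.of_forall fun y => ?_)
      · apply Continuous.aestronglyMeasurable
        simp only [heatKernel]
        fun_prop
      · rw [heatKernel, Real.norm_eq_abs, ← hcdef, abs_of_nonneg (by positivity)]
        calc c * Real.exp (-‖x - y‖^2/(4*t)) ≤ c * 1 := by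
              refine mul_le_mul_of_nonneg_left ?_ hc.le
              rw [Real.exp_le_one_iff, neg_div]
              exact neg_nonpos.2 (by positivity)
          _ = c := mul_one c
    have Ia : Integrable (fun y => u0 y * (inner ℝ x y : ℝ)) := by
      refine ((innerSL ℝ x).integrable_comp hint).congr (Eventually.of_forall fun y => ?_)
      simp only [innerSL_apply_apply]
      rw [real_inner_smul_right]
    have hz : ∫ y, u0 y * (inner ℝ x y : ℝ) = 0 := by
      have hfun : (fun y : EuclideanSpace ℝ (Fin n) => u0 y * (inner ℝ x y : ℝ))
          = fun y => (innerSL ℝ x) (u0 y • y) := by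
        funext y
        simp only [innerSL_apply_apply]
        rw [real_inner_smul_right]
      rw [hfun, ContinuousLinearMap.integral_comp_comm _ hint, hcenter]
      simp
    have hid : heatSol n u0 t x - M * heatKernel n t x
        = ∫ y, u0 y * (heatKernel n t (x - y) - heatKernel n t x
            - (inner ℝ x y : ℝ)/(2*t) * heatKernel n t x) := by
      have hfun : (fun y => u0 y * (heatKernel n t (x - y) - heatKernel n t x
            - (inner ℝ x y : ℝ)/(2*t) * heatKernel n t x))
          = fun y => heatKernel n t (x - y) * u0 y - u0 y * heatKernel n t x
              - (u0 y * (inner ℝ x y : ℝ)) * (heatKernel n t x/(2*t)) := by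
        funext y; ring
      have Isub : Integrable (fun y => heatKernel n t (x - y) * u0 y
          - u0 y * heatKernel n t x) :=
        I1.sub (hu0.mul_const (heatKernel n t x))
      have Isub2 : Integrable (fun y =>
          (u0 y * (inner ℝ x y : ℝ)) * (heatKernel n t x/(2*t))) :=
        Ia.mul_const _
      rw [hfun, integral_sub Isub Isub2,
        integral_sub I1 (hu0.mul_const (heatKernel n t x)), integral_mul_const,
        integral_mul_const, hM, hz, zero_mul, heatSol]
      ring
    rw [hid]
    have hbound : ∀ y, |u0 y * (heatKernel n t (x - y) - heatKernel n t x
          - (inner ℝ x y : ℝ)/(2*t) * heatKernel n t x)| ≤ (|u0 y| * ‖y‖^2) * Ψ x := by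
      intro y
      rw [abs_mul]
      by_cases h : u0 y = 0
      · simp only [h, abs_zero, zero_mul]
        positivity
      · have hyR := hsupp' y h
        have hk := key n ht x y hR hyR
        rw [← hcdef] at hk
        calc |u0 y| * |heatKernel n t (x - y) - heatKernel n t x
              - (inner ℝ x y : ℝ)/(2*t) * heatKernel n t x|
            ≤ |u0 y| * (‖y‖^2 * (Real.exp (R^2/4) * ((1/(2*t) + (‖x‖^2 + R^2)/(2*t^2)) *
                (c * Real.exp (-‖x‖^2/(8*t)))))) :=
              mul_le_mul_of_nonneg_left hk (abs_nonneg _)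
          _ = (|u0 y| * ‖y‖^2) * Ψ x := by simp only [hΨdef]; ring
    calc |∫ y, u0 y * (heatKernel n t (x - y) - heatKernel n t x
            - (inner ℝ x y : ℝ)/(2*t) * heatKernel n t x)|
        ≤ ∫ y, |u0 y * (heatKernel n t (x - y) - heatKernel n t x
            - (inner ℝ x y : ℝ)/(2*t) * heatKernel n t x)| := by
          simpa only [Real.norm_eq_abs] using norm_integral_le_integral_norm
            (fun y => u0 y * (heatKernel n t (x - y) - heatKernel n t x
              - (inner ℝ x y : ℝ)/(2*t) * heatKernel n t x)) (μ := volume)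
      _ ≤ ∫ y, (|u0 y| * ‖y‖^2) * Ψ x :=
          integral_mono_of_nonneg (Eventually.of_forall fun y => abs_nonneg _)
            (hm2i.mul_const (Ψ x)) (Eventually.of_forall hbound)
      _ = m2 * Ψ x := by rw [integral_mul_const, hm2def]
  calc (∫ x, |heatSol n u0 t x - M * heatKernel n t x|)
      ≤ ∫ x, m2 * Ψ x :=
        integral_mono_of_nonneg (Eventually.of_forall fun x => abs_nonneg _)
          (hΨint.const_mul m2) (Eventually.of_forall hpt)
    _ = m2 * ∫ x, Ψ x := integral_const_mul m2 Ψ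
    _ ≤ m2 * (κ/t) := mul_le_mul_of_nonneg_left hIψ hm2nonneg
    _ ≤ (m2*κ + 1)/t := by
        rw [show m2 * (κ/t) = (m2*κ)/t by ring]
        exact (div_le_div_iff_of_pos_right ht0).2 (by linarith)
end
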